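/- Let f : ℝ → ℝ be the probability density defined by f(x) = (4/5)(1 + x) for −1 ≤ x < 0, f(x) = (4/5)(1 − x/2) for 0 ≤ x ≤ 1, and f(x) = 0 otherwise. For 0 < d ≤ 3/2 define, for each candidate estimate x̂ ∈ ℝ, the captured probability P(x̂, d) = ∫_{x̂ − d/2}^{x̂ + d/2} f(x) dx. Then the point x̂ = d/6 maximizes P(·, d) over ℝ; i.e., the MP(d) estimate for this posterior density is d/6 for all 0 < d ≤ 3/2, and in particular the MP(d) estimate converges to the MAP estimate x = 0 as d → 0. -/
import Mathlib


open MeasureTheory Set Filter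

/-- The asymmetric unimodal posterior density of the example in Fig. 2. -/
noncomputable def examplePdf : ℝ → ℝ := fun x =>
  if -1 ≤ x ∧ x < 0 then (4/5) * (1 + x)
  else if 0 ≤ x ∧ x ≤ 1 then (4/5) * (1 - x/2)
  else 0

lemma examplePdf_measurable : Measurable examplePdf := by
  unfold examplePdf
  apply Measurable.ite
  · exact (measurableSet_Ici.inter measurableSet_Iio)
  · fun_prop
  apply Measurable.ite
  · exact (measurableSet_Ici.inter measurableSet_Iic)
  · fun_prop
  · fun_prop

lemma examplePdf_nonneg (x : ℝ) : 0 ≤ examplePdf x := by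
  unfold examplePdf
  split_ifs with h1 h2 <;> [nlinarith [h1.1, h1.2]; nlinarith [h2.1, h2.2]; rfl]

lemma examplePdf_le (x : ℝ) : examplePdf x ≤ 4/5 := by
  unfold examplePdf
  split_ifs with h1 h2 <;> [nlinarith [h1.1, h1.2]; nlinarith [h2.1, h2.2]; norm_num]

lemma intInt (g : ℝ → ℝ) (hg : Measurable g) (h0 : ∀ x, 0 ≤ g x)
    (h1 : ∀ x, g x ≤ 4/5) (a b : ℝ) : IntervalIntegrable g volume a b := by
  apply IntervalIntegrable.mono_fun' (g := fun _ => (4/5 : ℝ)) intervalIntegrable_const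
  · exact hg.aestronglyMeasurable.restrict
  · filter_upwards with x
    rw [Real.norm_eq_abs, abs_of_nonneg (h0 x)]
    exact h1 x

theorem example_mpd_estimate :
    (∀ d : ℝ, 0 < d → d ≤ 3/2 → ∀ xhat : ℝ,
      (∫ x in (xhat - d/2)..(xhat + d/2), examplePdf x)
        ≤ ∫ x in (d/6 - d/2)..(d/6 + d/2), examplePdf x) ∧
    Tendsto (fun d : ℝ => d/6) (nhdsWithin 0 (Ioi 0)) (nhds 0) := by
  constructor
  · intro d hd hd' xhat
    set c : ℝ := (4/5) * (1 - d/3) with hc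
    have hc0 : 0 ≤ c := by rw [hc]; nlinarith
    set a : ℝ := xhat - d/2 with ha
    set b : ℝ := xhat + d/2 with hb
    set a' : ℝ := d/6 - d/2 with ha'
    set b' : ℝ := d/6 + d/2 with hb'
    have hab : a ≤ b := by rw [ha, hb]; linarith
    have ha'b' : a' ≤ b' := by rw [ha', hb']; linarith
    -- pointwise facts
    have hfge : ∀ x ∈ Icc a' b', c ≤ examplePdf x := by
      intro x hx
      obtain ⟨hx1, hx2⟩ := hx
      rw [ha'] at hx1; rw [hb'] at hx2
      unfold examplePdf
      split_ifs with h1 h2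
      · rw [hc]; nlinarith [h1.1, h1.2]
      · rw [hc]; nlinarith [h2.1, h2.2]
      · exfalso
        rcases lt_or_ge x 0 with hx0 | hx0
        · exact h1 ⟨by linarith, hx0⟩
        · exact h2 ⟨hx0, by linarith⟩
    have hfle : ∀ x, x ≤ a' ∨ b' ≤ x → examplePdf x ≤ c := by
      intro x hx
      unfold examplePdf
      split_ifs with h1 h2
      · rw [hc]
        rcases hx with hx | hx
        · rw [ha'] at hx; nlinarith
        · rw [hb'] at hx; nlinarith [h1.2]
      · rw [hc]
        rcases hx with hx | hx
        · rw [ha'] at hx; nlinarith [h2.1]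
        · rw [hb'] at hx; nlinarith
      · exact hc0
    -- the excess function
    set h : ℝ → ℝ := fun x => examplePdf x - min (examplePdf x) c with hh
    have hmin_meas : Measurable fun x => min (examplePdf x) c :=
      examplePdf_measurable.min measurable_const
    have hmin_nonneg : ∀ x, 0 ≤ min (examplePdf x) c := fun x =>
      le_min (examplePdf_nonneg x) hc0
    have hmin_le : ∀ x, min (examplePdf x) c ≤ 4/5 := fun x =>
      (min_le_left _ _).trans (examplePdf_le x)
    have hmin_int : ∀ u v : ℝ, IntervalIntegrable (fun x => min (examplePdf x) c) volume u v :=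
      intInt _ hmin_meas hmin_nonneg hmin_le
    have hf_int : ∀ u v : ℝ, IntervalIntegrable examplePdf volume u v :=
      intInt _ examplePdf_measurable examplePdf_nonneg examplePdf_le
    have hh_int : ∀ u v : ℝ, IntervalIntegrable h volume u v := fun u v =>
      (hf_int u v).sub (hmin_int u v)
    have hh_nonneg : ∀ x, 0 ≤ h x := fun x => by
      simp only [hh]; simp [min_le_left]
    have hh_zero : ∀ x, x ≤ a' ∨ b' ≤ x → h x = 0 := by
      intro x hx
      simp only [hh, min_eq_left (hfle x hx), sub_self]
    -- split both integrals
    have split : ∀ u v : ℝ,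
        (∫ x in u..v, examplePdf x)
          = (∫ x in u..v, min (examplePdf x) c) + ∫ x in u..v, h x := by
      intro u v
      rw [← intervalIntegral.integral_add (hmin_int u v) (hh_int u v)]
      congr 1
      ext x
      simp [hh]
    set A : ℝ := min a a' with hA
    set B : ℝ := max b b' with hB
    have hAa' : A ≤ a' := min_le_right _ _
    have hb'B : b' ≤ B := le_max_right _ _
    -- ∫_a^b h ≤ ∫_{a'}^{b'} h
    have hstep2 : (∫ x in a..b, h x) ≤ ∫ x in a'..b', h x := by
      have h1 : (∫ x in a..b, h x) ≤ ∫ x in A..B, h x := by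
        apply intervalIntegral.integral_mono_interval (min_le_left a a') hab (le_max_left b b')
        · filter_upwards with x; exact hh_nonneg x
        · exact hh_int A B
      have hzero1 : (∫ x in A..a', h x) = 0 := by
        rw [intervalIntegral.integral_congr (g := fun _ => (0:ℝ)), intervalIntegral.integral_zero]
        intro x hx
        rw [uIcc_of_le hAa'] at hx
        exact hh_zero x (Or.inl hx.2)
      have hzero2 : (∫ x in b'..B, h x) = 0 := by
        rw [intervalIntegral.integral_congr (g := fun _ => (0:ℝ)), intervalIntegral.integral_zero]
        intro x hx
        rw [uIcc_of_le hb'B] at hx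
        exact hh_zero x (Or.inr hx.1)
      have hsum : (∫ x in A..B, h x) = ∫ x in a'..b', h x := by
        rw [← intervalIntegral.integral_add_adjacent_intervals (hh_int A a') (hh_int a' B),
          ← intervalIntegral.integral_add_adjacent_intervals (hh_int a' b') (hh_int b' B),
          hzero1, hzero2]
        ring
      linarith
    -- ∫_a^b min ≤ d * c = ∫_{a'}^{b'} min
    have hstep1 : (∫ x in a..b, min (examplePdf x) c) ≤ ∫ x in a'..b', min (examplePdf x) c := by
      have h1 : (∫ x in a..b, min (examplePdf x) c) ≤ ∫ x in a..b, c := by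
        apply intervalIntegral.integral_mono_on hab (hmin_int a b) intervalIntegrable_const
        intro x _; exact min_le_right _ _
      have h2 : (∫ x in a'..b', min (examplePdf x) c) = ∫ x in a'..b', c := by
        apply intervalIntegral.integral_congr
        intro x hx
        rw [uIcc_of_le ha'b'] at hx
        exact min_eq_right (hfge x hx)
      have h3 : (∫ _x in a..b, c) = (∫ _x in a'..b', c) := by
        rw [intervalIntegral.integral_const, intervalIntegral.integral_const]
        congr 1
        rw [ha, hb, ha', hb']; ring
      rw [h2, ← h3]
      exact h1
    rw [split a b, split a' b']
    exact add_le_add hstep1 hstep2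
  · have : Tendsto (fun d : ℝ => d/6) (nhds 0) (nhds 0) := by
      simpa using (continuous_id.div_const (6:ℝ)).tendsto 0
    exact this.mono_left nhdsWithin_le_nhds
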